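/- Let k ≥ 1, let m : ℝ → ℝ^(2k) be the moment curve m(t) = (t, t², …, t^(2k)), and let P, Q ⊂ ℝ be disjoint (k+1)-element sets. Then conv(m(P)) ∩ conv(m(Q)) ≠ ∅ if and only if P and Q alternate. -/

import Mathlib

/-- The moment curve `t ↦ (t, t², …, t^d)` in `ℝ^d`. -/
def moment (d : ℕ) : ℝ → (Fin d → ℝ) := fun t i => t ^ ((i : ℕ) + 1)

/-- Two finite subsets `P = {s₁ < s₂ < … < s_p}` and `Q = {t₁ < t₂ < … < t_p}` of a
linear order alternate if either `s₁ < t₁ < s₂ < t₂ < … < s_p < t_p` or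
`t₁ < s₁ < t₂ < s₂ < … < t_p < s_p`. -/
def Alternates {α : Type*} [LinearOrder α] (P Q : Finset α) : Prop :=
  ∃ (p : ℕ) (f g : Fin p → α), StrictMono f ∧ StrictMono g ∧
    Set.range f = (P : Set α) ∧ Set.range g = (Q : Set α) ∧
    (((∀ i : Fin p, f i < g i) ∧ ∀ i j : Fin p, (i : ℕ) + 1 = (j : ℕ) → g i < f j) ∨
      ((∀ i : Fin p, g i < f i) ∧ ∀ i j : Fin p, (i : ℕ) + 1 = (j : ℕ) → f i < g j))

open Finset Polynomial



lemma pair_key {n : ℕ} {x : Fin (n+2) → ℝ} (hx : StrictMono x)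
    {w : Fin (n+2) → ℝ} (hw : ∀ e < n+1, ∑ j, w j * x j ^ e = 0)
    (j : Fin (n+1)) :
    w j.castSucc * w j.succ ≤ 0 ∧ (w j.castSucc = 0 ↔ w j.succ = 0) := by
  set a := j.castSucc with ha
  set b := j.succ with hb
  have hvb : (b:ℕ) = (a:ℕ) + 1 := by simp [ha, hb]
  have hab : a < b := (Fin.castSucc_lt_succ : j.castSucc < j.succ)
  have habne : a ≠ b := ne_of_lt hab
  set s : Finset (Fin (n+2)) := univ \ {a, b} with hs
  have hmem : ∀ l ∈ s, l ≠ a ∧ l ≠ b := by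
    intro l hl
    simp only [hs, Finset.mem_sdiff, Finset.mem_insert, Finset.mem_singleton] at hl
    exact ⟨fun h => hl.2 (Or.inl h), fun h => hl.2 (Or.inr h)⟩
  have hside : ∀ l ∈ s, l < a ∨ b < l := by
    intro l hl
    obtain ⟨h1, h2⟩ := hmem l hl
    rw [Fin.lt_def, Fin.lt_def]
    have e1 : (l:ℕ) ≠ (a:ℕ) := fun h => h1 (Fin.ext h)
    have e2 : (l:ℕ) ≠ (b:ℕ) := fun h => h2 (Fin.ext h)
    omega
  have hcard : s.card = n := by
    rw [hs, Finset.card_sdiff_of_subset (by simp)]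
    simp [Finset.card_insert_of_notMem, habne]
  set p : ℝ[X] := ∏ l ∈ s, (X - C (x l)) with hp
  have hdeg : p.natDegree < n + 1 := by
    have h1 : p.natDegree ≤ ∑ l ∈ s, (X - C (x l)).natDegree := Polynomial.natDegree_prod_le _ _
    simp only [Polynomial.natDegree_X_sub_C, Finset.sum_const, smul_eq_mul, mul_one] at h1
    omega
  have hsum : ∑ l, w l * p.eval (x l) = 0 := by
    have hev : ∀ l : Fin (n+2), p.eval (x l) = ∑ i ∈ Finset.range (n+1), p.coeff i * x l ^ i :=
      fun l => p.eval_eq_sum_range' hdeg (x l)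
    calc ∑ l, w l * p.eval (x l)
        = ∑ l, ∑ i ∈ Finset.range (n+1), w l * (p.coeff i * x l ^ i) := by
          refine Finset.sum_congr rfl fun l _ => ?_
          rw [hev l, Finset.mul_sum]
      _ = ∑ i ∈ Finset.range (n+1), ∑ l, w l * (p.coeff i * x l ^ i) := Finset.sum_comm
      _ = 0 := by
          refine Finset.sum_eq_zero fun i hi => ?_
          have h0 := hw i (Finset.mem_range.1 hi)
          calc ∑ l, w l * (p.coeff i * x l ^ i)
              = p.coeff i * ∑ l, w l * x l ^ i := by
                rw [Finset.mul_sum]; exact Finset.sum_congr rfl fun l _ => by ring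
            _ = 0 := by rw [h0, mul_zero]
  have hzero : ∀ l ∈ s, w l * p.eval (x l) = 0 := by
    intro l hl
    have : p.eval (x l) = 0 := by
      rw [hp, Polynomial.eval_prod]
      exact Finset.prod_eq_zero hl (by simp)
    rw [this, mul_zero]
  have hsplit : w a * p.eval (x a) + w b * p.eval (x b) = 0 := by
    have h1 : ∑ l ∈ s, (fun l => w l * p.eval (x l)) l
        + ∑ l ∈ ({a, b} : Finset (Fin (n+2))), (fun l => w l * p.eval (x l)) l
        = ∑ l, w l * p.eval (x l) := Finset.sum_sdiff (Finset.subset_univ _)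
    rw [Finset.sum_pair habne, Finset.sum_eq_zero hzero, zero_add, hsum] at h1
    exact h1
  have hposAB : 0 < p.eval (x a) * p.eval (x b) := by
    rw [hp, Polynomial.eval_prod, Polynomial.eval_prod, ← Finset.prod_mul_distrib]
    refine Finset.prod_pos fun l hl => ?_
    simp only [Polynomial.eval_sub, Polynomial.eval_X, Polynomial.eval_C]
    rcases hside l hl with h | h
    · have h1 : x l < x a := hx h
      have h2 : x l < x b := h1.trans (hx hab)
      exact mul_pos (by linarith) (by linarith)
    · have h1 : x b < x l := hx h
      have h2 : x a < x l := (hx hab).trans h1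
      exact mul_pos_of_neg_of_neg (by linarith) (by linarith)
  have hAne : p.eval (x a) ≠ 0 := fun h => by rw [h, zero_mul] at hposAB; exact lt_irrefl 0 hposAB
  have hBne : p.eval (x b) ≠ 0 := fun h => by rw [h, mul_zero] at hposAB; exact lt_irrefl 0 hposAB
  constructor
  · by_contra hc
    push_neg at hc
    have h2 : (w a * p.eval (x a)) * (w b * p.eval (x b)) = -(w b * p.eval (x b))^2 := by
      rw [show w a * p.eval (x a) = -(w b * p.eval (x b)) by linarith]; ring
    nlinarith [h2, mul_pos hc hposAB, sq_nonneg (w b * p.eval (x b))]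
  · constructor
    · intro h
      rw [h, zero_mul, zero_add] at hsplit
      exact (mul_eq_zero.1 hsplit).resolve_right hBne
    · intro h
      rw [h, zero_mul, add_zero] at hsplit
      exact (mul_eq_zero.1 hsplit).resolve_right hAne

lemma all_nonzero_alt {n : ℕ} {x : Fin (n+2) → ℝ} (hx : StrictMono x)
    {w : Fin (n+2) → ℝ} (hw : ∀ e < n+1, ∑ j, w j * x j ^ e = 0) (hw0 : w ≠ 0) :
    (∀ j, w j ≠ 0) ∧ ∀ j : Fin (n+1), w j.castSucc * w j.succ < 0 := by
  have key := fun j => pair_key hx hw j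
  have h0 : ∀ j : Fin (n+2), (w j = 0 ↔ w 0 = 0) := by
    intro j
    induction j using Fin.induction with
    | zero => exact Iff.rfl
    | succ i ih => exact ((key i).2.symm.trans ih)
  obtain ⟨j0, hj0⟩ := Function.ne_iff.1 hw0
  have hz0 : w 0 ≠ 0 := fun h => hj0 (by simpa using (h0 j0).2 h)
  have hnz : ∀ j, w j ≠ 0 := fun j hj => hz0 ((h0 j).1 hj)
  exact ⟨hnz, fun j => lt_of_le_of_ne (key j).1 (mul_ne_zero (hnz _) (hnz _))⟩

lemma parity_pos {n : ℕ} {w : Fin (n+2) → ℝ}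
    (halt : ∀ j : Fin (n+1), w j.castSucc * w j.succ < 0)
    (h0 : 0 < w 0) (j : Fin (n+2)) : (Even (j:ℕ) → 0 < w j) ∧ (¬Even (j:ℕ) → w j < 0) := by
  induction j using Fin.induction with
  | zero => exact ⟨fun _ => h0, fun h => absurd Even.zero h⟩
  | succ i ih =>
    have hlt := halt i
    have hcv : ((i.castSucc : Fin (n+2)) : ℕ) = (i:ℕ) := Fin.coe_castSucc i
    have hsv : ((i.succ : Fin (n+2)) : ℕ) = (i:ℕ)+1 := Fin.val_succ i
    constructor
    · intro he
      have hni : ¬ Even (i:ℕ) := by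
        rw [hsv, Nat.even_add_one] at he; exact he
      have hneg := ih.2 (by rwa [hcv])
      nlinarith
    · intro he
      have hei : Even (i:ℕ) := by
        rw [hsv, Nat.even_add_one, not_not] at he; exact he
      have hpos := ih.1 (by rwa [hcv])
      nlinarith


lemma exists_kernel (n : ℕ) (x : Fin (n+2) → ℝ) :
    ∃ c : Fin (n+2) → ℝ, c ≠ 0 ∧ ∀ e < n+1, ∑ j, c j * x j ^ e = 0 := by
  let T : (Fin (n+2) → ℝ) →ₗ[ℝ] (Fin (n+1) → ℝ) :=
    { toFun := fun c e => ∑ j, c j * x j ^ (e:ℕ)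
      map_add' := fun c d => by
        funext e; simp [add_mul, Finset.sum_add_distrib]
      map_smul' := fun r c => by
        funext e; simp [Finset.mul_sum, mul_assoc] }
  have hni : ¬ Function.Injective T := by
    intro hT
    have h1 := LinearMap.finrank_le_finrank_of_injective hT
    simp only [Module.finrank_fintype_fun_eq_card, Fintype.card_fin] at h1
    omega
  rw [Function.not_injective_iff] at hni
  obtain ⟨c1, c2, heq, hne⟩ := hni
  refine ⟨c1 - c2, sub_ne_zero.2 hne, fun e he => ?_⟩
  have hz : T (c1 - c2) = 0 := by rw [map_sub, heq, sub_self]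
  have h2 := congrFun hz ⟨e, he⟩
  simpa [T] using h2

lemma sum_orderIso {s : Finset ℝ} {n : ℕ} (h : s.card = n) (G : ℝ → ℝ) :
    ∑ j : Fin n, G ((s.orderIsoOfFin h j : ℝ)) = ∑ u ∈ s, G u := by
  rw [← Finset.sum_coe_sort s (fun u => G u)]
  exact Fintype.sum_equiv (s.orderIsoOfFin h).toEquiv _ _ (fun j => rfl)

lemma sum_range_even_odd (p : ℕ) (F : ℕ → ℝ) :
    ∑ j ∈ Finset.range (2*p), F j
      = ∑ i ∈ Finset.range p, F (2*i) + ∑ i ∈ Finset.range p, F (2*i+1) := by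
  induction p with
  | zero => simp
  | succ q ih =>
    have h : 2*(q+1) = 2*q + 1 + 1 := by ring
    rw [h, Finset.sum_range_succ, Finset.sum_range_succ, ih,
        Finset.sum_range_succ, Finset.sum_range_succ]
    ring

lemma fin_sum_even_odd {k : ℕ} (F : Fin (2*k+2) → ℝ) :
    ∑ j, F j = (∑ i : Fin (k+1), F ⟨2*(i:ℕ), by have := i.isLt; omega⟩)
      + ∑ i : Fin (k+1), F ⟨2*(i:ℕ)+1, by have := i.isLt; omega⟩ := by
  classical
  set G : ℕ → ℝ := fun j => if h : j < 2*k+2 then F ⟨j, h⟩ else 0 with hG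
  have h1 : ∑ j, F j = ∑ j ∈ Finset.range (2*k+2), G j := by
    rw [← Fin.sum_univ_eq_sum_range]
    exact Finset.sum_congr rfl fun j _ => by simp [hG, j.isLt]
  have h2 : ∀ i : Fin (k+1), G (2*(i:ℕ)) = F ⟨2*(i:ℕ), by have := i.isLt; omega⟩ := by
    intro i
    have hi : 2*(i:ℕ) < 2*k+2 := by have := i.isLt; omega
    simp [hG, hi]
  have h3 : ∀ i : Fin (k+1), G (2*(i:ℕ)+1) = F ⟨2*(i:ℕ)+1, by have := i.isLt; omega⟩ := by
    intro i
    have hi : 2*(i:ℕ)+1 < 2*k+2 := by have := i.isLt; omega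
    simp [hG, hi]
  have h4 := sum_range_even_odd (k+1) G
  rw [show 2*(k+1) = 2*k+2 from by ring] at h4
  rw [h1, h4]
  congr 1
  · rw [← Fin.sum_univ_eq_sum_range (fun i => G (2*i)) (k+1)]
    exact Finset.sum_congr rfl fun i _ => h2 i
  · rw [← Fin.sum_univ_eq_sum_range (fun i => G (2*i+1)) (k+1)]
    exact Finset.sum_congr rfl fun i _ => h3 i

lemma mem_hull_image {d : ℕ} (hd : 0 < d) (P : Finset ℝ) (z : Fin d → ℝ)
    (hz : z ∈ convexHull ℝ (moment d '' (P : Set ℝ))) :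
    ∃ a : ℝ → ℝ, (∀ s ∈ P, 0 ≤ a s) ∧ ∑ s ∈ P, a s = 1 ∧ ∑ s ∈ P, a s • moment d s = z := by
  have hinj : Function.Injective (moment d) := by
    intro s t h
    have := congrFun h ⟨0, hd⟩
    simpa [moment] using this
  rw [show moment d '' (P:Set ℝ) = ((P.image (moment d) : Finset _) : Set _) by
        rw [Finset.coe_image], Finset.convexHull_eq] at hz
  obtain ⟨w, hw0, hw1, hwz⟩ := hz
  rw [Finset.centerMass_eq_of_sum_1 _ _ hw1] at hwz
  refine ⟨fun s => w (moment d s), fun s hs => hw0 _ (Finset.mem_image_of_mem _ hs), ?_, ?_⟩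
  · rw [← hw1]; exact (Finset.sum_image (fun a _ b _ h => hinj h)).symm
  · rw [← hwz, Finset.sum_image (fun a _ b _ h => hinj h)]
    simp

lemma alternates_of_even {k : ℕ} {x : Fin (2*k+2) → ℝ} (hx : StrictMono x)
    {P Q : Finset ℝ}
    (hPx : ∀ j, x j ∈ P ↔ Even (j:ℕ))
    (hQx : ∀ j, x j ∈ Q ↔ ¬ Even (j:ℕ))
    (hPr : (P : Set ℝ) ⊆ Set.range x) (hQr : (Q : Set ℝ) ⊆ Set.range x) :
    Alternates P Q := by
  refine ⟨k+1, fun i => x ⟨2*(i:ℕ), by have := i.isLt; omega⟩,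
    fun i => x ⟨2*(i:ℕ)+1, by have := i.isLt; omega⟩, ?_, ?_, ?_, ?_, Or.inl ⟨?_, ?_⟩⟩
  · intro i i' h
    exact hx (by rw [Fin.lt_def]; simpa using by omega)
  · intro i i' h
    exact hx (by rw [Fin.lt_def]; simpa using by omega)
  · ext u
    constructor
    · rintro ⟨i, rfl⟩
      exact (hPx _).2 ⟨i, by simp; ring⟩
    · intro hu
      obtain ⟨j, rfl⟩ := hPr hu
      have hev : Even (j:ℕ) := (hPx j).1 hu
      obtain ⟨r, hr⟩ := hev
      have hrk : r < k+1 := by have := j.isLt; omega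
      exact ⟨⟨r, hrk⟩, by exact congrArg x (by apply Fin.ext; show 2*r = (j:ℕ); omega)⟩
  · ext u
    constructor
    · rintro ⟨i, rfl⟩
      refine (hQx _).2 ?_
      simp [Nat.even_add_one, parity_simps]
    · intro hu
      obtain ⟨j, rfl⟩ := hQr hu
      have hev : ¬ Even (j:ℕ) := (hQx j).1 hu
      obtain ⟨r, hr⟩ : ∃ r, (j:ℕ) = 2*r+1 := by
        rcases Nat.even_or_odd (j:ℕ) with h | h
        · exact absurd h hev
        · exact h
      have hrk : r < k+1 := by have := j.isLt; omega
      exact ⟨⟨r, hrk⟩, by exact congrArg x (by apply Fin.ext; show 2*r+1 = (j:ℕ); omega)⟩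
  · intro i
    exact hx (by rw [Fin.lt_def]; simp)
  · intro i j hij
    exact hx (by rw [Fin.lt_def]; simp; omega)

lemma alternates_symm {P Q : Finset ℝ} (h : Alternates P Q) : Alternates Q P := by
  obtain ⟨p, f, g, hf, hg, hfP, hgQ, hc⟩ := h
  exact ⟨p, g, f, hg, hf, hgQ, hfP, hc.symm⟩

lemma forward {k : ℕ} (hk : 1 ≤ k) {P Q : Finset ℝ} (hPQ : Disjoint P Q)
    (hP : P.card = k+1) (hQ : Q.card = k+1)
    (h : (convexHull ℝ (moment (2*k) '' (P:Set ℝ)) ∩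
      convexHull ℝ (moment (2*k) '' (Q:Set ℝ))).Nonempty) :
    Alternates P Q := by
  obtain ⟨z, hzP, hzQ⟩ := h
  obtain ⟨aP, haP0, haP1, haPz⟩ := mem_hull_image (by omega) P z hzP
  obtain ⟨aQ, haQ0, haQ1, haQz⟩ := mem_hull_image (by omega) Q z hzQ
  have hcard : (P ∪ Q).card = 2*k+2 := by
    rw [Finset.card_union_of_disjoint hPQ, hP, hQ]; ring
  set x : Fin (2*k+2) → ℝ := fun j => ((P ∪ Q).orderIsoOfFin hcard j : ℝ) with hxdef
  have hxmem : ∀ j, x j ∈ P ∪ Q := fun j => ((P ∪ Q).orderIsoOfFin hcard j).2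
  have hxmono : StrictMono x := fun i j hij => by
    exact_mod_cast ((P ∪ Q).orderIsoOfFin hcard).strictMono hij
  have hxr : ∀ u ∈ P ∪ Q, ∃ j, x j = u := by
    intro u hu
    refine ⟨((P ∪ Q).orderIsoOfFin hcard).symm ⟨u, hu⟩, ?_⟩
    show (((P ∪ Q).orderIsoOfFin hcard) (((P ∪ Q).orderIsoOfFin hcard).symm ⟨u, hu⟩) : ℝ) = u
    rw [OrderIso.apply_symm_apply]
  set w : Fin (2*k+2) → ℝ := fun j => if x j ∈ P then aP (x j) else -aQ (x j) with hwdef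
  have heq : ∀ e < 2*k+1, ∑ u ∈ P, aP u * u ^ e = ∑ u ∈ Q, aQ u * u ^ e := by
    intro e he
    rcases Nat.eq_zero_or_pos e with rfl | hepos
    · simpa using haP1.trans haQ1.symm
    · obtain ⟨i, rfl⟩ : ∃ i, e = i + 1 := ⟨e-1, by omega⟩
      have hi : i < 2*k := by omega
      have hcf := congrFun (haPz.trans haQz.symm) ⟨i, hi⟩
      simpa [moment, Finset.sum_apply] using hcf
  have hkey : ∀ e < 2*k+1, ∑ j, w j * x j ^ e = 0 := by
    intro e he
    have hre : ∑ j, w j * x j ^ e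
        = ∑ u ∈ P ∪ Q, (if u ∈ P then aP u else -aQ u) * u ^ e :=
      sum_orderIso hcard (fun u => (if u ∈ P then aP u else -aQ u) * u ^ e)
    rw [hre, Finset.sum_union hPQ]
    have h1 : ∑ u ∈ P, (if u ∈ P then aP u else -aQ u) * u ^ e = ∑ u ∈ P, aP u * u ^ e :=
      Finset.sum_congr rfl fun u hu => by rw [if_pos hu]
    have h2 : ∑ u ∈ Q, (if u ∈ P then aP u else -aQ u) * u ^ e = -∑ u ∈ Q, aQ u * u ^ e := by
      rw [← Finset.sum_neg_distrib]
      exact Finset.sum_congr rfl fun u hu => by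
        rw [if_neg (Finset.disjoint_right.1 hPQ hu)]; ring
    rw [h1, h2, heq e he]
    ring
  have hw0 : w ≠ 0 := by
    obtain ⟨s0, hs0P, hs0⟩ : ∃ s ∈ P, aP s ≠ 0 := by
      by_contra hc
      push_neg at hc
      rw [Finset.sum_eq_zero hc] at haP1
      exact one_ne_zero haP1.symm
    obtain ⟨j, hj⟩ := hxr s0 (Finset.mem_union_left _ hs0P)
    intro hw
    have h1 : w j = aP s0 := by rw [hwdef]; simp only [hj, if_pos hs0P]
    rw [hw] at h1
    exact hs0 (by simpa using h1.symm)
  obtain ⟨hnz, halt⟩ := all_nonzero_alt hxmono hkey hw0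
  have hmemP : ∀ j, x j ∈ P ↔ 0 < w j := by
    intro j
    constructor
    · intro hj
      have h1 : w j = aP (x j) := by rw [hwdef]; simp only [if_pos hj]
      have := haP0 _ hj
      have := hnz j
      rw [h1] at *
      cases lt_or_eq_of_le ‹0 ≤ aP (x j)› with
      | inl h => exact h
      | inr h => exact absurd h.symm ‹aP (x j) ≠ 0›
    · intro hj
      by_contra hjP
      have hjQ : x j ∈ Q := (Finset.mem_union.1 (hxmem j)).resolve_left hjP
      have h1 : w j = -aQ (x j) := by rw [hwdef]; simp only [if_neg hjP]
      have := haQ0 _ hjQ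
      rw [h1] at hj
      linarith
  have hmemQ : ∀ j, x j ∈ Q ↔ w j < 0 := by
    intro j
    constructor
    · intro hj
      by_contra hc
      push_neg at hc
      have hpos : 0 < w j := lt_of_le_of_ne hc (Ne.symm (hnz j))
      have := (hmemP j).2 hpos
      exact Finset.disjoint_left.1 hPQ this hj
    · intro hj
      rcases Finset.mem_union.1 (hxmem j) with h | h
      · have := (hmemP j).1 h
        linarith
      · exact h
  rcases lt_or_gt_of_ne (hnz 0) with h0 | h0
  · -- w 0 < 0 : Q occupies even positions
    have halt' : ∀ j : Fin (2*k+1), (-w) j.castSucc * (-w) j.succ < 0 := by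
      intro j
      have := halt j
      simp only [Pi.neg_apply]
      nlinarith
    have hpar := parity_pos halt' (by simpa using h0)
    refine alternates_symm (alternates_of_even hxmono (fun j => ?_) (fun j => ?_)
      (fun u hu => ?_) (fun u hu => ?_))
    · constructor
      · intro hj
        by_contra hne
        have := (hpar j).2 hne
        simp only [Pi.neg_apply] at this
        have := (hmemQ j).1 hj
        linarith
      · intro hj
        have := (hpar j).1 hj
        simp only [Pi.neg_apply] at this
        exact (hmemQ j).2 (by linarith)
    · constructor
      · intro hj
        by_contra hne
        have := (hpar j).1 hne
        simp only [Pi.neg_apply] at this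
        have := (hmemP j).1 hj
        linarith
      · intro hj
        have := (hpar j).2 hj
        simp only [Pi.neg_apply] at this
        exact (hmemP j).2 (by linarith)
    · obtain ⟨j, hj⟩ := hxr u (Finset.mem_union_right _ hu)
      exact ⟨j, hj⟩
    · obtain ⟨j, hj⟩ := hxr u (Finset.mem_union_left _ hu)
      exact ⟨j, hj⟩
  · -- w 0 > 0 : P occupies even positions
    have hpar := parity_pos halt h0
    refine alternates_of_even hxmono (fun j => ?_) (fun j => ?_)
      (fun u hu => ?_) (fun u hu => ?_)
    · constructor
      · intro hj
        by_contra hne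
        have := (hpar j).2 hne
        have := (hmemP j).1 hj
        linarith
      · intro hj
        exact (hmemP j).2 ((hpar j).1 hj)
    · constructor
      · intro hj
        by_contra hne
        have := (hpar j).1 hne
        have := (hmemQ j).1 hj
        linarith
      · intro hj
        exact (hmemQ j).2 ((hpar j).2 hj)
    · obtain ⟨j, hj⟩ := hxr u (Finset.mem_union_left _ hu)
      exact ⟨j, hj⟩
    · obtain ⟨j, hj⟩ := hxr u (Finset.mem_union_right _ hu)
      exact ⟨j, hj⟩

lemma backward_aux {k : ℕ} {P Q : Finset ℝ}
    (f g : Fin (k+1) → ℝ) (hf : StrictMono f) (hg : StrictMono g)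
    (hfP : Set.range f = (P : Set ℝ)) (hgQ : Set.range g = (Q : Set ℝ))
    (h1 : ∀ i, f i < g i) (h2 : ∀ i j : Fin (k+1), (i:ℕ)+1 = (j:ℕ) → g i < f j) :
    (convexHull ℝ (moment (2*k) '' (P:Set ℝ)) ∩
      convexHull ℝ (moment (2*k) '' (Q:Set ℝ))).Nonempty := by
  classical
  set x : Fin (2*k+2) → ℝ := fun j =>
    if h : Even (j:ℕ) then f ⟨(j:ℕ)/2, by have := j.isLt; omega⟩
    else g ⟨(j:ℕ)/2, by have := j.isLt; omega⟩ with hxdef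
  have hxval1 : ∀ (m : ℕ) (hm : m < 2*k+2) (hm2 : m/2 < k+1), Even m →
      x ⟨m, hm⟩ = f ⟨m/2, hm2⟩ := by
    intro m hm hm2 he
    simp only [hxdef]
    exact dif_pos he
  have hxval2 : ∀ (m : ℕ) (hm : m < 2*k+2) (hm2 : m/2 < k+1), ¬ Even m →
      x ⟨m, hm⟩ = g ⟨m/2, hm2⟩ := by
    intro m hm hm2 he
    simp only [hxdef]
    exact dif_neg he
  have hxeven : ∀ (i : Fin (k+1)), x ⟨2*(i:ℕ), by have := i.isLt; omega⟩ = f i := by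
    intro i
    rw [hxval1 (2*(i:ℕ)) (by have := i.isLt; omega) (by have := i.isLt; omega)
      ⟨(i:ℕ), by ring⟩]
    exact congrArg f (by apply Fin.ext; show 2*(i:ℕ)/2 = (i:ℕ); omega)
  have hxodd : ∀ (i : Fin (k+1)), x ⟨2*(i:ℕ)+1, by have := i.isLt; omega⟩ = g i := by
    intro i
    rw [hxval2 (2*(i:ℕ)+1) (by have := i.isLt; omega) (by have := i.isLt; omega)
      (by simp [Nat.even_add_one, parity_simps])]
    exact congrArg g (by apply Fin.ext; show (2*(i:ℕ)+1)/2 = (i:ℕ); omega)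
  have hxmono : StrictMono x := by
    rw [Fin.strictMono_iff_lt_succ]
    intro i
    have hilt : (i:ℕ) < 2*k+1 := i.isLt
    by_cases he : Even (i:ℕ)
    · have ha : x i.castSucc = f ⟨(i:ℕ)/2, by omega⟩ :=
        hxval1 (i:ℕ) (by omega) (by omega) he
      have hb : x i.succ = g ⟨((i:ℕ)+1)/2, by omega⟩ :=
        hxval2 ((i:ℕ)+1) (by omega) (by omega) (by simpa [Nat.even_add_one] using he)
      rw [ha, hb]
      have hfix : (⟨((i:ℕ)+1)/2, by omega⟩ : Fin (k+1)) = ⟨(i:ℕ)/2, by omega⟩ := by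
        apply Fin.ext
        show ((i:ℕ)+1)/2 = (i:ℕ)/2
        obtain ⟨r, hr⟩ := he
        omega
      rw [hfix]
      exact h1 _
    · have ha : x i.castSucc = g ⟨(i:ℕ)/2, by omega⟩ :=
        hxval2 (i:ℕ) (by omega) (by omega) he
      have hb : x i.succ = f ⟨((i:ℕ)+1)/2, by omega⟩ :=
        hxval1 ((i:ℕ)+1) (by omega) (by omega) (by simpa [Nat.even_add_one] using he)
      rw [ha, hb]
      refine h2 _ _ ?_
      show (i:ℕ)/2 + 1 = ((i:ℕ)+1)/2
      have hodd : (i:ℕ) % 2 = 1 := by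
        rcases Nat.even_or_odd (i:ℕ) with h | h
        · exact absurd h he
        · exact Nat.odd_iff.1 h
      omega
  obtain ⟨c, hc0, hck⟩ := exists_kernel (2*k) x
  obtain ⟨hnz, halt⟩ := all_nonzero_alt hxmono hck hc0
  obtain ⟨d, hdk, hdpar⟩ : ∃ d : Fin (2*k+2) → ℝ,
      (∀ e < 2*k+1, ∑ j, d j * x j ^ e = 0) ∧
      ∀ j : Fin (2*k+2), (Even (j:ℕ) → 0 < d j) ∧ (¬Even (j:ℕ) → d j < 0) := by
    rcases lt_or_gt_of_ne (hnz 0) with h0 | h0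
    · refine ⟨-c, fun e he => ?_, parity_pos (fun j => by
        have := halt j; simp only [Pi.neg_apply]; nlinarith) (by simpa using h0)⟩
      have := hck e he
      simp only [Pi.neg_apply, neg_mul]
      rw [Finset.sum_neg_distrib, this, neg_zero]
    · exact ⟨c, hck, parity_pos halt h0⟩
  set S : ℝ := ∑ i : Fin (k+1), d ⟨2*(i:ℕ), by have := i.isLt; omega⟩ with hSdef
  have hdeven : ∀ i : Fin (k+1), 0 < d ⟨2*(i:ℕ), by have := i.isLt; omega⟩ := by
    intro i
    exact (hdpar _).1 (show Even (2*(i:ℕ)) from ⟨(i:ℕ), by ring⟩)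
  have hdodd : ∀ i : Fin (k+1), d ⟨2*(i:ℕ)+1, by have := i.isLt; omega⟩ < 0 := by
    intro i
    exact (hdpar _).2 (show ¬ Even (2*(i:ℕ)+1) by simp [Nat.even_add_one, parity_simps])
  have hSpos : 0 < S := by
    rw [hSdef]
    exact Finset.sum_pos (fun i _ => hdeven i) ⟨0, Finset.mem_univ 0⟩
  have htot : ∑ j, d j = 0 := by
    have := hdk 0 (by omega)
    simpa using this
  have hOdd : ∑ i : Fin (k+1), d ⟨2*(i:ℕ)+1, by have := i.isLt; omega⟩ = -S := by
    have hsplit := fin_sum_even_odd (k := k) (fun j => d j)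
    rw [htot] at hsplit
    rw [hSdef]
    linarith
  set z : Fin (2*k) → ℝ :=
    ∑ i : Fin (k+1), (d ⟨2*(i:ℕ), by have := i.isLt; omega⟩ / S) • moment (2*k) (f i)
    with hzdef
  have hsums : ∀ e < 2*k+1,
      ∑ i : Fin (k+1), d ⟨2*(i:ℕ), by have := i.isLt; omega⟩ * (f i) ^ e
        = ∑ i : Fin (k+1), (- d ⟨2*(i:ℕ)+1, by have := i.isLt; omega⟩) * (g i) ^ e := by
    intro e he
    have h0 := hdk e he
    have hsplit := fin_sum_even_odd (k := k) (fun j => d j * x j ^ e)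
    rw [h0] at hsplit
    have hA : ∑ i : Fin (k+1),
          d ⟨2*(i:ℕ), by have := i.isLt; omega⟩ * x ⟨2*(i:ℕ), by have := i.isLt; omega⟩ ^ e
        = ∑ i : Fin (k+1), d ⟨2*(i:ℕ), by have := i.isLt; omega⟩ * (f i) ^ e :=
      Finset.sum_congr rfl fun i _ => by rw [hxeven i]
    have hB : ∑ i : Fin (k+1),
          d ⟨2*(i:ℕ)+1, by have := i.isLt; omega⟩ * x ⟨2*(i:ℕ)+1, by have := i.isLt; omega⟩ ^ e
        = ∑ i : Fin (k+1), d ⟨2*(i:ℕ)+1, by have := i.isLt; omega⟩ * (g i) ^ e :=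
      Finset.sum_congr rfl fun i _ => by rw [hxodd i]
    rw [hA, hB] at hsplit
    have hneg : ∑ i : Fin (k+1), (- d ⟨2*(i:ℕ)+1, by have := i.isLt; omega⟩) * (g i) ^ e
        = - ∑ i : Fin (k+1), d ⟨2*(i:ℕ)+1, by have := i.isLt; omega⟩ * (g i) ^ e := by
      rw [← Finset.sum_neg_distrib]
      exact Finset.sum_congr rfl fun i _ => by ring
    rw [hneg]
    linarith
  refine ⟨z, ?_, ?_⟩
  · refine mem_convexHull_of_exists_fintype
      (fun i : Fin (k+1) => d ⟨2*(i:ℕ), by have := i.isLt; omega⟩ / S)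
      (fun i => moment (2*k) (f i)) (fun i => ?_) ?_ (fun i => ?_) ?_
    · exact le_of_lt (div_pos (hdeven i) hSpos)
    · rw [← Finset.sum_div, ← hSdef, div_self (ne_of_gt hSpos)]
    · exact ⟨f i, by rw [← hfP]; exact Set.mem_range_self i, rfl⟩
    · rw [hzdef]
  · refine mem_convexHull_of_exists_fintype
      (fun i : Fin (k+1) => (- d ⟨2*(i:ℕ)+1, by have := i.isLt; omega⟩) / S)
      (fun i => moment (2*k) (g i)) (fun i => ?_) ?_ (fun i => ?_) ?_
    · have := hdodd i
      exact le_of_lt (div_pos (by linarith) hSpos)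
    · rw [← Finset.sum_div, Finset.sum_neg_distrib, hOdd, neg_neg,
        div_self (ne_of_gt hSpos)]
    · exact ⟨g i, by rw [← hgQ]; exact Set.mem_range_self i, rfl⟩
    · rw [hzdef]
      funext i'
      simp only [Finset.sum_apply, Pi.smul_apply, smul_eq_mul, moment]
      have hs := hsums ((i':ℕ)+1) (by have := i'.isLt; omega)
      calc ∑ i : Fin (k+1), (- d ⟨2*(i:ℕ)+1, by have := i.isLt; omega⟩) / S * g i ^ ((i':ℕ)+1)
          = (∑ i : Fin (k+1), (- d ⟨2*(i:ℕ)+1, by have := i.isLt; omega⟩) * g i ^ ((i':ℕ)+1)) / S := by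
            rw [Finset.sum_div]
            exact Finset.sum_congr rfl fun i _ => by ring
        _ = (∑ i : Fin (k+1), d ⟨2*(i:ℕ), by have := i.isLt; omega⟩ * f i ^ ((i':ℕ)+1)) / S := by
            rw [hs]
        _ = ∑ i : Fin (k+1), d ⟨2*(i:ℕ), by have := i.isLt; omega⟩ / S * f i ^ ((i':ℕ)+1) := by
            rw [Finset.sum_div]
            exact Finset.sum_congr rfl fun i _ => by ring

theorem stmt8 (k : ℕ) (hk : 1 ≤ k) (P Q : Finset ℝ) (hPQ : Disjoint P Q)
    (hP : P.card = k + 1) (hQ : Q.card = k + 1) :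
    (convexHull ℝ (moment (2 * k) '' (P : Set ℝ)) ∩
      convexHull ℝ (moment (2 * k) '' (Q : Set ℝ))).Nonempty ↔ Alternates P Q := by
  constructor
  · exact fun h => forward hk hPQ hP hQ h
  · rintro ⟨p, f, g, hf, hg, hfP, hgQ, hcase⟩
    have hp : p = k + 1 := by
      have himg : (Finset.image f Finset.univ : Set ℝ) = (P : Set ℝ) := by
        rw [Finset.coe_image, Finset.coe_univ, Set.image_univ, hfP]
      have : Finset.image f Finset.univ = P := Finset.coe_injective himg
      rw [← hP, ← this, Finset.card_image_of_injective _ hf.injective, Finset.card_univ,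
        Fintype.card_fin]
    subst hp
    rcases hcase with ⟨ha, hb⟩ | ⟨ha, hb⟩
    · exact backward_aux f g hf hg hfP hgQ ha hb
    · have := backward_aux g f hg hf hgQ hfP ha hb
      rwa [Set.inter_comm] at this
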